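/- Let p ≥ 3 be an odd prime and w ≥ 1 an integer. Then 2·k((p−1)/2, w) < p^w. -/

import Mathlib

namespace KT
/-- decode -/
def D (s : ℕ) : List ℕ → List (ℕ × ℕ)
  | [] => []
  | x :: xs => (1 + (xs.takeWhile (· = s)).length, x) :: D s (xs.dropWhile (· = s))
  termination_by l => l.length
  decreasing_by
    simpa [Nat.lt_succ_iff] using (List.dropWhile_sublist (l := xs) _).length_le

/-- encode -/
def E (s : ℕ) (L : List (ℕ × ℕ)) : List ℕ :=
  L.flatMap (fun q => q.2 :: List.replicate (q.1 - 1) s)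

lemma tw_dw (s k : ℕ) (l : List ℕ) (hl : ∀ y, l.head? = some y → y ≠ s) :
    (List.replicate k s ++ l).takeWhile (· = s) = List.replicate k s ∧
    (List.replicate k s ++ l).dropWhile (· = s) = l := by
  induction k with
  | zero =>
    simp only [List.replicate_zero, List.nil_append]
    cases l with
    | nil => simp
    | cons y t =>
      have := hl y rfl
      simp [List.takeWhile_cons, List.dropWhile_cons, this]
  | succ k ih =>
    simp [List.replicate_succ, List.takeWhile_cons, List.dropWhile_cons, ih.1, ih.2]

lemma E_head (s : ℕ) (L : List (ℕ × ℕ)) (hL : ∀ q ∈ L, q.2 ≠ s) :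
    ∀ y, (E s L).head? = some y → y ≠ s := by
  cases L with
  | nil => simp [E]
  | cons q L' =>
    intro y hy
    simp [E, List.flatMap_cons] at hy
    exact hy ▸ hL q List.mem_cons_self

lemma D_E (s : ℕ) : ∀ (L : List (ℕ × ℕ)), (∀ q ∈ L, 1 ≤ q.1 ∧ q.2 ≠ s) → D s (E s L) = L := by
  intro L
  induction L with
  | nil => intro _; rw [show E s [] = [] from rfl, D]
  | cons q L' ih =>
    intro h
    obtain ⟨hq1, hq2⟩ := h q List.mem_cons_self
    have hL' : ∀ r ∈ L', 1 ≤ r.1 ∧ r.2 ≠ s := fun r hr => h r (List.mem_cons_of_mem _ hr)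
    have hhead := E_head s L' (fun r hr => (hL' r hr).2)
    have key := tw_dw s (q.1 - 1) (E s L') hhead
    have hE : E s (q :: L') = q.2 :: (List.replicate (q.1 - 1) s ++ E s L') := by
      simp [E, List.flatMap_cons]
    rw [hE, D, key.1, key.2, ih hL']
    obtain ⟨a, c⟩ := q
    simp only [List.length_replicate, List.cons.injEq, Prod.mk.injEq, and_true, true_and]
    simp only at hq1
    omega

lemma E_length (s : ℕ) (L : List (ℕ × ℕ)) (hL : ∀ q ∈ L, 1 ≤ q.1) :
    (E s L).length = (L.map Prod.fst).sum := by
  induction L with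
  | nil => simp [E]
  | cons q L' ih =>
    have hq := hL q List.mem_cons_self
    have := ih (fun r hr => hL r (List.mem_cons_of_mem _ hr))
    simp [E, List.flatMap_cons] at this ⊢
    omega

lemma E_mem (s : ℕ) (L : List (ℕ × ℕ)) (hL : ∀ q ∈ L, q.2 ≤ s) :
    ∀ x ∈ E s L, x ≤ s := by
  intro x hx
  simp only [E, List.mem_flatMap, List.mem_cons, List.mem_replicate] at hx
  obtain ⟨q, hq, hx⟩ := hx
  rcases hx with rfl | ⟨-, rfl⟩
  · exact hL q hq
  · exact le_refl _

lemma sigma_ext (x y : Σ n : ℕ, Nat.Partition n) (h : x.2.parts = y.2.parts) : x = y := by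
  obtain ⟨n, P⟩ := x
  obtain ⟨m, Q⟩ := y
  simp only at h
  obtain rfl : n = m := by rw [← P.parts_sum, ← Q.parts_sum, h]
  exact congrArg _ (Nat.Partition.ext h)

lemma filter_map_pair (c : ℕ) (m : Multiset ℕ) (j : ℕ) :
    ((m.map (fun a => Nat.pair a j)).filter (fun n => n.unpair.2 = c)).map
      (fun n => n.unpair.1) = if j = c then m else 0 := by
  induction m using Multiset.induction with
  | empty => simp
  | cons a m ih =>
    rcases eq_or_ne j c with rfl | h
    · simp [Multiset.filter_cons, Nat.unpair_pair, ih]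
    · simp [Multiset.filter_cons, Nat.unpair_pair, h, ih]

lemma map_filter_sum {ι : Type*} (t : Finset ι) (p : ℕ → Prop) [DecidablePred p] (g : ℕ → ℕ)
    (F : ι → Multiset ℕ) :
    ((∑ i ∈ t, F i).filter p).map g = ∑ i ∈ t, ((F i).filter p).map g := by
  classical
  induction t using Finset.induction with
  | empty => simp
  | insert _ _ h ih => simp [Finset.sum_insert h, Multiset.filter_add, Multiset.map_add, ih]

def M (s : ℕ) (f : Fin s → Σ n : ℕ, Nat.Partition n) : Multiset ℕ :=
  ∑ i : Fin s, ((f i).2.parts.map (fun a => Nat.pair a i.val))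

lemma M_recover (s : ℕ) (f : Fin s → Σ n : ℕ, Nat.Partition n) (i : Fin s) :
    ((M s f).filter (fun n => n.unpair.2 = i.val)).map (fun n => n.unpair.1) =
      (f i).2.parts := by
  rw [M, map_filter_sum]
  rw [Finset.sum_eq_single i]
  · rw [filter_map_pair]
    simp
  · intro j _ hj
    rw [filter_map_pair, if_neg (fun h => hj (Fin.ext h))]
  · simp

lemma M_injective (s : ℕ) : Function.Injective (M s) := by
  intro f g h
  funext i
  apply sigma_ext
  rw [← M_recover s f i, ← M_recover s g i, h]

lemma M_mem (s : ℕ) (f : Fin s → Σ n : ℕ, Nat.Partition n) {n : ℕ} (hn : n ∈ M s f) :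
    ∃ (i : Fin s) (a : ℕ), a ∈ (f i).2.parts ∧ n = Nat.pair a i.val := by
  rw [M, Multiset.mem_sum] at hn
  obtain ⟨i, -, hi⟩ := hn
  obtain ⟨a, ha, rfl⟩ := Multiset.mem_map.mp hi
  exact ⟨i, a, ha, rfl⟩

def L (s : ℕ) (f : Fin s → Σ n : ℕ, Nat.Partition n) : List (ℕ × ℕ) :=
  ((M s f).sort (· ≤ ·)).map Nat.unpair

lemma L_cond (s : ℕ) (f : Fin s → Σ n : ℕ, Nat.Partition n) :
    ∀ q ∈ L s f, (1 ≤ q.1 ∧ q.2 ≠ s) ∧ q.2 ≤ s := by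
  intro q hq
  obtain ⟨n, hn, rfl⟩ := List.mem_map.mp hq
  have hn' : n ∈ M s f := (Multiset.mem_sort _).mp hn
  obtain ⟨i, a, ha, rfl⟩ := M_mem s f hn'
  have hi : (i : ℕ) < s := i.isLt
  have ha1 : 0 < a := (f i).2.parts_pos ha
  simp only [Nat.unpair_pair]
  exact ⟨⟨ha1, by omega⟩, by omega⟩

lemma unpair_injective : Function.Injective Nat.unpair := by
  intro a b h
  rw [← Nat.pair_unpair a, ← Nat.pair_unpair b, h]

def code (s : ℕ) (f : Fin s → Σ n : ℕ, Nat.Partition n) : List ℕ := E s (L s f)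

lemma code_injective (s : ℕ) : Function.Injective (code s) := by
  intro f g h
  apply M_injective s
  have hL : L s f = L s g := by
    rw [← D_E s (L s f) (fun q hq => (L_cond s f q hq).1),
        ← D_E s (L s g) (fun q hq => (L_cond s g q hq).1)]
    exact congrArg (D s) h
  have := (List.map_injective_iff.mpr unpair_injective) hL
  have h2 : ((((M s f).sort (· ≤ ·)) : List ℕ) : Multiset ℕ)
      = (((M s g).sort (· ≤ ·) : List ℕ) : Multiset ℕ) := congrArg _ this
  rwa [Multiset.sort_eq, Multiset.sort_eq] at h2

lemma multiset_sum_sum {ι : Type*} (t : Finset ι) (F : ι → Multiset ℕ) :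
    (∑ i ∈ t, F i).sum = ∑ i ∈ t, (F i).sum := by
  classical
  induction t using Finset.induction with
  | empty => simp
  | insert _ _ h ih => simp [Finset.sum_insert h, Multiset.sum_add, ih]

lemma multiset_map_sum {ι : Type*} (t : Finset ι) (g : ℕ → ℕ) (F : ι → Multiset ℕ) :
    (∑ i ∈ t, F i).map g = ∑ i ∈ t, (F i).map g := by
  classical
  induction t using Finset.induction with
  | empty => simp
  | insert _ _ h ih => simp [Finset.sum_insert h, Multiset.map_add, ih]

lemma code_length (s : ℕ) (f : Fin s → Σ n : ℕ, Nat.Partition n) :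
    (code s f).length = ∑ i, (f i).1 := by
  rw [code, E_length s _ (fun q hq => ((L_cond s f q hq).1).1)]
  have h1 : (((L s f).map Prod.fst : List ℕ) : Multiset ℕ).sum = ((L s f).map Prod.fst).sum :=
    Multiset.sum_coe _
  rw [← h1]
  have h2 : ((L s f).map Prod.fst : Multiset ℕ) = (M s f).map (fun n => n.unpair.1) := by
    rw [L, ← Multiset.map_coe, ← Multiset.map_coe, Multiset.sort_eq, Multiset.map_map]
    rfl
  rw [h2, M, multiset_map_sum, multiset_sum_sum]
  congr 1
  funext i
  rw [Multiset.map_map]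
  have : (f i).2.parts.map ((fun n => (Nat.unpair n).1) ∘ fun a => Nat.pair a i.val)
      = (f i).2.parts := by
    simp [Function.comp, Nat.unpair_pair]
  rw [this, (f i).2.parts_sum]

lemma parts_of_zero (x : Σ n : ℕ, Nat.Partition n) (hx : x.1 = 0) : x.2.parts = 0 := by
  by_contra h
  obtain ⟨a, ha⟩ := Multiset.exists_mem_of_ne_zero h
  have h1 : 0 < a := x.2.parts_pos ha
  have h2 : a ≤ x.2.parts.sum := Multiset.single_le_sum (fun y _ => Nat.zero_le y) a ha
  rw [x.2.parts_sum, hx] at h2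
  omega

lemma parts_of_one (x : Σ n : ℕ, Nat.Partition n) (hx : x.1 = 1) : x.2.parts = {1} := by
  have hall : ∀ a ∈ x.2.parts, a = 1 := by
    intro a ha
    have h1 : 0 < a := x.2.parts_pos ha
    have h2 : a ≤ x.2.parts.sum := Multiset.single_le_sum (fun y _ => Nat.zero_le y) a ha
    rw [x.2.parts_sum, hx] at h2
    omega
  have hrep : x.2.parts = Multiset.replicate (Multiset.card x.2.parts) 1 :=
    Multiset.eq_replicate_card.mpr hall
  have hsum : x.2.parts.sum = 1 := by rw [x.2.parts_sum, hx]
  rw [hrep, Multiset.sum_replicate, smul_eq_mul, mul_one] at hsum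
  rw [hrep, hsum]
  rfl

lemma exists_one {s : ℕ} (f : Fin s → Σ n : ℕ, Nat.Partition n)
    (hf : ∑ i, (f i).1 = 1) : ∃ i, (f i).1 = 1 := by
  by_contra hc
  push_neg at hc
  have : ∀ i : Fin s, (f i).1 = 0 := by
    intro i
    have h2 : (f i).1 ≤ ∑ j, (f j).1 :=
      Finset.single_le_sum (f := fun j => (f j).1) (fun j _ => Nat.zero_le _)
        (Finset.mem_univ i)
    rw [hf] at h2
    have := hc i
    omega
  rw [Finset.sum_congr rfl (fun i _ => this i)] at hf
  simp at hf

lemma arith (s w : ℕ) (hs : 1 ≤ s) (hw : 2 ≤ w) : 2 * (s + 1) ^ w < (2 * s + 1) ^ w := by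
  induction w, hw using Nat.le_induction with
  | base => ring_nf; nlinarith
  | succ w hw ih =>
    have h1 : 2 * (s + 1) ^ (w + 1) = 2 * (s + 1) ^ w * (s + 1) := by ring
    have h2 : (2 * s + 1) ^ (w + 1) = (2 * s + 1) ^ w * (2 * s + 1) := by ring
    rw [h1, h2]
    calc 2 * (s + 1) ^ w * (s + 1) < (2 * s + 1) ^ w * (s + 1) :=
          (Nat.mul_lt_mul_right (by omega)).mpr ih
      _ ≤ (2 * s + 1) ^ w * (2 * s + 1) := Nat.mul_le_mul_left _ (by omega)

end KT

/-- `kTuples s t` is the number of `s`-tuples `(λ₁, …, λ_s)` of integer partitions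
(of arbitrary nonnegative integers) with `|λ₁| + ⋯ + |λ_s| = t`. -/
noncomputable def kTuples (s t : ℕ) : ℕ :=
  Nat.card { f : Fin s → Σ n : ℕ, Nat.Partition n // ∑ i, (f i).1 = t }

lemma kTuples_le_pow (s w : ℕ) : kTuples s w ≤ (s + 1) ^ w := by
  have hcard : Nat.card (Fin w → Fin (s + 1)) = (s + 1) ^ w := by
    simp [Nat.card_eq_fintype_card]
  rw [kTuples, ← hcard]
  have hinj : Function.Injective
      (fun (x : { f : Fin s → Σ n : ℕ, Nat.Partition n // ∑ i, (f i).1 = w }) =>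
        (fun (j : Fin w) =>
          (⟨min ((KT.code s x.1).getD j 0) s,
            Nat.lt_succ_of_le (min_le_right _ _)⟩ : Fin (s + 1)))) := by
    intro x y h
    apply Subtype.ext
    apply KT.code_injective s
    have lenx : (KT.code s x.1).length = w := by rw [KT.code_length]; exact x.2
    have leny : (KT.code s y.1).length = w := by rw [KT.code_length]; exact y.2
    apply List.ext_getElem (by rw [lenx, leny])
    intro n h1 h2
    have hn : n < w := lenx ▸ h1
    have hfun := congrFun h ⟨n, hn⟩
    have hx : (KT.code s x.1)[n] ≤ s :=
      KT.E_mem s _ (fun q hq => (KT.L_cond s x.1 q hq).2) _ (List.getElem_mem _)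
    have hy : (KT.code s y.1)[n] ≤ s :=
      KT.E_mem s _ (fun q hq => (KT.L_cond s y.1 q hq).2) _ (List.getElem_mem _)
    have hv := congrArg Fin.val hfun
    simp only at hv
    have e1 : (KT.code s x.1).getD n 0 = (KT.code s x.1)[n] :=
      List.getD_eq_getElem _ _ h1
    have e2 : (KT.code s y.1).getD n 0 = (KT.code s y.1)[n] :=
      List.getD_eq_getElem _ _ h2
    clear h hfun
    omega
  exact Nat.card_le_card_of_injective _ hinj

lemma kTuples_one_le (s : ℕ) : kTuples s 1 ≤ s := by
  have hcard : Nat.card (Fin s) = s := by simp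
  rw [kTuples]
  have hinj : Function.Injective
      (fun (x : { f : Fin s → Σ n : ℕ, Nat.Partition n // ∑ i, (f i).1 = 1 }) =>
        Classical.choose (KT.exists_one x.1 x.2)) := by
    intro x y h
    have hxi : (x.1 (Classical.choose (KT.exists_one x.1 x.2))).1 = 1 :=
      Classical.choose_spec (KT.exists_one x.1 x.2)
    have hyi : (y.1 (Classical.choose (KT.exists_one y.1 y.2))).1 = 1 :=
      Classical.choose_spec (KT.exists_one y.1 y.2)
    simp only at h
    set i := Classical.choose (KT.exists_one x.1 x.2) with hi
    rw [← h] at hyi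
    have hzero : ∀ (z : { f : Fin s → Σ n : ℕ, Nat.Partition n // ∑ i, (f i).1 = 1 })
        (hz : (z.1 i).1 = 1) (j : Fin s), j ≠ i → (z.1 j).1 = 0 := by
      intro z hz j hj
      have hsum := z.2
      rw [← Finset.add_sum_erase _ _ (Finset.mem_univ i), hz] at hsum
      have h0 : ∑ k ∈ Finset.univ.erase i, (z.1 k).1 = 0 := by omega
      exact (Finset.sum_eq_zero_iff.mp h0) j (Finset.mem_erase.mpr ⟨hj, Finset.mem_univ j⟩)
    apply Subtype.ext
    funext j
    apply KT.sigma_ext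
    by_cases hj : j = i
    · subst hj
      rw [KT.parts_of_one _ hxi, KT.parts_of_one _ hyi]
    · rw [KT.parts_of_zero _ (hzero x hxi j hj), KT.parts_of_zero _ (hzero y hyi j hj)]
  exact (Nat.card_le_card_of_injective _ hinj).trans hcard.le

theorem two_mul_kTuples_half_lt_pow (p w : ℕ) (hp : p.Prime) (h3 : 3 ≤ p) (hw : 1 ≤ w) :
    2 * kTuples ((p - 1) / 2) w < p ^ w := by
  set s := (p - 1) / 2 with hs_def
  have hodd : p % 2 = 1 := Nat.odd_iff.mp (hp.odd_of_ne_two (by omega))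
  have hps : p = 2 * s + 1 := by omega
  have hs : 1 ≤ s := by omega
  rcases eq_or_lt_of_le hw with hw1 | hw2
  · rw [← hw1, pow_one]
    have := kTuples_one_le s
    omega
  · have h2w : 2 ≤ w := hw2
    have h1 := kTuples_le_pow s w
    have h2 := KT.arith s w hs h2w
    calc 2 * kTuples s w ≤ 2 * (s + 1) ^ w := by omega
      _ < (2 * s + 1) ^ w := h2
      _ = p ^ w := by rw [hps]
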